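/- Let k be a field containing a primitive 6-th root of unity. Then the diagonal algebra k^5 (functions from a 5-element set to k with pointwise operations) admits a connected grading by the cyclic group C_6 = ZMod 6, i.e., a grading whose support generates ZMod 6. -/
import Mathlib

/-- The five basis vectors of the grading of `k^5`. -/
def V13 (k : Type*) [Field k] (q : k) : Fin 5 → (Fin 5 → k) :=
  ![![1, 1, 0, 0, 0], ![1, -1, 0, 0, 0], ![0, 0, 1, 1, 1],
    ![0, 0, 1, q ^ 2, q ^ 4], ![0, 0, 1, q ^ 4, q ^ 2]]

/-- The degrees of the five basis vectors. -/
def D13 : Fin 5 → ZMod 6 := ![0, 3, 0, 2, 4]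

/-- The grading submodules. -/
def X13 (k : Type*) [Field k] (q : k) (a : ZMod 6) : Submodule k (Fin 5 → k) :=
  Submodule.span k (V13 k q '' {i | D13 i = a})

set_option maxHeartbeats 1000000 in
/-- Let `k` be a field containing a primitive 6-th root of unity.  Then the diagonal
algebra `k^5` admits a connected grading by the cyclic group `C_6 = ZMod 6`, i.e. a
grading whose support generates `ZMod 6`. -/
theorem stmt13 (k : Type*) [Field k] (q : k) (hq : IsPrimitiveRoot q 6) :
    ∃ X : ZMod 6 → Submodule k (Fin 5 → k),
      iSupIndep X ∧ (⨆ a, X a) = ⊤ ∧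
      (∀ a b, X a * X b ≤ X (a + b)) ∧
      AddSubgroup.closure {a | X a ≠ ⊥} = ⊤ := by
  -- basic facts about `q`
  have hq6 : q ^ 6 = 1 := hq.pow_eq_one
  have hq2 : q ^ 2 ≠ 1 := hq.pow_ne_one_of_pos_of_lt (by norm_num) (by norm_num)
  have hq3 : q ^ 3 ≠ 1 := hq.pow_ne_one_of_pos_of_lt (by norm_num) (by norm_num)
  have hq3' : q ^ 3 = -1 := by
    have h : (q ^ 3 - 1) * (q ^ 3 + 1) = 0 := by linear_combination hq6
    rcases mul_eq_zero.1 h with h | h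
    · exact absurd (sub_eq_zero.1 h) hq3
    · exact eq_neg_of_add_eq_zero_left h
  have h2 : (2 : k) ≠ 0 := by
    intro h
    apply hq3
    rw [hq3']
    linear_combination -h
  have hsum : 1 + q ^ 2 + q ^ 4 = 0 := by
    have h : (q ^ 2 - 1) * (1 + q ^ 2 + q ^ 4) = 0 := by linear_combination hq6
    rcases mul_eq_zero.1 h with h | h
    · exact absurd (sub_eq_zero.1 h) hq2
    · exact h
  have h3 : (3 : k) ≠ 0 := by
    intro h
    apply hq2
    have hcube : (q ^ 2 - 1) ^ 3 = 0 := by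
      linear_combination hq6 + (q ^ 2 - q ^ 4) * h
    exact sub_eq_zero.1 (pow_eq_zero_iff (n := 3) (by norm_num) |>.1 hcube)
  set v := V13 k q with hv_def
  set d := D13 with hd_def
  set X := X13 k q with hX_def
  -- membership helper
  have hv_mem : ∀ (m : Fin 5) (a : ZMod 6), d m = a → v m ∈ X a := fun m a h =>
    Submodule.subset_span ⟨m, h, rfl⟩
  have mem : ∀ j : Fin 5, v j ∈ Submodule.span k (Set.range v) := fun j =>
    Submodule.subset_span ⟨j, rfl⟩
  -- spanning : every standard basis vector is in the span of the `v i`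
  have htop : ⊤ ≤ Submodule.span k (Set.range v) := by
    rw [← (Pi.basisFun k (Fin 5)).span_eq]
    refine Submodule.span_le.2 ?_
    rintro _ ⟨i, rfl⟩
    fin_cases i
    · show (Pi.basisFun k (Fin 5)) 0 ∈ Submodule.span k (Set.range v)
      have h : (Pi.basisFun k (Fin 5)) 0 = (2 : k)⁻¹ • (v 0 + v 1) := by
        rw [eq_inv_smul_iff₀ h2]
        funext x
        fin_cases x <;>
          simp [hv_def, V13, Pi.basisFun_apply, Pi.single_apply] <;>
          first
            | ring1
            | linear_combination hsum
            | linear_combination -hsum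
            | linear_combination 2 * hq6
            | linear_combination -(2 * hq6)
            | linear_combination q ^ 2 * hq6 + hsum
            | linear_combination -(q ^ 2 * hq6 + hsum)
            | linear_combination hq6
            | linear_combination -hq6
      rw [h]
      exact Submodule.smul_mem _ _ (Submodule.add_mem _ (mem 0) (mem 1))
    · show (Pi.basisFun k (Fin 5)) 1 ∈ Submodule.span k (Set.range v)
      have h : (Pi.basisFun k (Fin 5)) 1 = (2 : k)⁻¹ • (v 0 - v 1) := by
        rw [eq_inv_smul_iff₀ h2]
        funext x
        fin_cases x <;>
          simp [hv_def, V13, Pi.basisFun_apply, Pi.single_apply] <;>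
          first
            | ring1
            | linear_combination hsum
            | linear_combination -hsum
            | linear_combination 2 * hq6
            | linear_combination -(2 * hq6)
            | linear_combination q ^ 2 * hq6 + hsum
            | linear_combination -(q ^ 2 * hq6 + hsum)
            | linear_combination hq6
            | linear_combination -hq6
      rw [h]
      exact Submodule.smul_mem _ _ (Submodule.sub_mem _ (mem 0) (mem 1))
    · show (Pi.basisFun k (Fin 5)) 2 ∈ Submodule.span k (Set.range v)
      have h : (Pi.basisFun k (Fin 5)) 2 = (3 : k)⁻¹ • (v 2 + v 3 + v 4) := by
        rw [eq_inv_smul_iff₀ h3]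
        funext x
        fin_cases x <;>
          simp [hv_def, V13, Pi.basisFun_apply, Pi.single_apply] <;>
          first
            | ring1
            | linear_combination hsum
            | linear_combination -hsum
            | linear_combination 2 * hq6
            | linear_combination -(2 * hq6)
            | linear_combination q ^ 2 * hq6 + hsum
            | linear_combination -(q ^ 2 * hq6 + hsum)
            | linear_combination hq6
            | linear_combination -hq6
      rw [h]
      exact Submodule.smul_mem _ _
        (Submodule.add_mem _ (Submodule.add_mem _ (mem 2) (mem 3)) (mem 4))
    · show (Pi.basisFun k (Fin 5)) 3 ∈ Submodule.span k (Set.range v)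
      have h : (Pi.basisFun k (Fin 5)) 3 = (3 : k)⁻¹ • (v 2 + q ^ 4 • v 3 + q ^ 2 • v 4) := by
        rw [eq_inv_smul_iff₀ h3]
        funext x
        fin_cases x <;>
          simp [hv_def, V13, Pi.basisFun_apply, Pi.single_apply, smul_eq_mul] <;>
          first
            | ring1
            | linear_combination hsum
            | linear_combination -hsum
            | linear_combination 2 * hq6
            | linear_combination -(2 * hq6)
            | linear_combination q ^ 2 * hq6 + hsum
            | linear_combination -(q ^ 2 * hq6 + hsum)
            | linear_combination hq6
            | linear_combination -hq6
      rw [h]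
      exact Submodule.smul_mem _ _
        (Submodule.add_mem _ (Submodule.add_mem _ (mem 2) (Submodule.smul_mem _ _ (mem 3)))
          (Submodule.smul_mem _ _ (mem 4)))
    · show (Pi.basisFun k (Fin 5)) 4 ∈ Submodule.span k (Set.range v)
      have h : (Pi.basisFun k (Fin 5)) 4 = (3 : k)⁻¹ • (v 2 + q ^ 2 • v 3 + q ^ 4 • v 4) := by
        rw [eq_inv_smul_iff₀ h3]
        funext x
        fin_cases x <;>
          simp [hv_def, V13, Pi.basisFun_apply, Pi.single_apply, smul_eq_mul] <;>
          first
            | ring1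
            | linear_combination hsum
            | linear_combination -hsum
            | linear_combination 2 * hq6
            | linear_combination -(2 * hq6)
            | linear_combination q ^ 2 * hq6 + hsum
            | linear_combination -(q ^ 2 * hq6 + hsum)
            | linear_combination hq6
            | linear_combination -hq6
      rw [h]
      exact Submodule.smul_mem _ _
        (Submodule.add_mem _ (Submodule.add_mem _ (mem 2) (Submodule.smul_mem _ _ (mem 3)))
          (Submodule.smul_mem _ _ (mem 4)))
  -- linear independence
  have hli : LinearIndependent k v :=
    linearIndependent_of_top_le_span_of_card_eq_finrank htop
      (by simp [Module.finrank_pi])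
  refine ⟨X, ?_, ?_, ?_, ?_⟩
  · -- independence
    intro a
    have h1 : X a ≤ Submodule.span k (v '' {i | d i = a}) := le_of_eq rfl
    have h2' : (⨆ (b) (_ : b ≠ a), X b) ≤ Submodule.span k (v '' {i | d i ≠ a}) := by
      refine iSup_le fun b => iSup_le fun hb => Submodule.span_mono ?_
      exact Set.image_mono fun i (hi : d i = b) (hia : d i = a) => hb (hi.symm.trans hia)
    exact (hli.disjoint_span_image (by
      intro s hs hs' i hi
      exact absurd (hs hi) (hs' hi))).mono h1 h2'
  · -- supremum is everything
    refine le_antisymm le_top (htop.trans (Submodule.span_le.2 ?_))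
    rintro _ ⟨i, rfl⟩
    exact Submodule.mem_iSup_of_mem (d i) (hv_mem i _ rfl)
  · -- multiplicativity
    intro a b
    rw [hX_def]
    show Submodule.span k _ * Submodule.span k _ ≤ _
    rw [Submodule.span_mul_span]
    refine Submodule.span_le.2 ?_
    rintro _ ⟨_, ⟨i, hi, rfl⟩, _, ⟨j, hj, rfl⟩, rfl⟩
    have key : ∀ i j : Fin 5, v i * v j ∈ X (d i + d j) := by
      have hmul : ∀ (i j m : Fin 5), v i * v j = v m → d i + d j = d m →
          v i * v j ∈ X (d i + d j) := by
        intro i j m hm hd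
        rw [hm, hd]
        exact hv_mem m _ rfl
      have hzero : ∀ (i j : Fin 5), v i * v j = 0 → v i * v j ∈ X (d i + d j) := by
        intro i j hm
        rw [hm]; exact Submodule.zero_mem _
      intro i j
      fin_cases i <;> fin_cases j
      · exact hmul _ _ 0 (by funext x; fin_cases x <;> simp [hv_def, V13, Matrix.vecHead, Matrix.vecTail]) (by decide)
      · exact hmul _ _ 1 (by funext x; fin_cases x <;> simp [hv_def, V13, Matrix.vecHead, Matrix.vecTail]) (by decide)
      · exact hzero _ _ (by funext x; fin_cases x <;> simp [hv_def, V13, Matrix.vecHead, Matrix.vecTail])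
      · exact hzero _ _ (by funext x; fin_cases x <;> simp [hv_def, V13, Matrix.vecHead, Matrix.vecTail])
      · exact hzero _ _ (by funext x; fin_cases x <;> simp [hv_def, V13, Matrix.vecHead, Matrix.vecTail])
      · exact hmul _ _ 1 (by funext x; fin_cases x <;> simp [hv_def, V13, Matrix.vecHead, Matrix.vecTail]) (by decide)
      · exact hmul _ _ 0 (by funext x; fin_cases x <;> simp [hv_def, V13, Matrix.vecHead, Matrix.vecTail]) (by decide)
      · exact hzero _ _ (by funext x; fin_cases x <;> simp [hv_def, V13, Matrix.vecHead, Matrix.vecTail])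
      · exact hzero _ _ (by funext x; fin_cases x <;> simp [hv_def, V13, Matrix.vecHead, Matrix.vecTail])
      · exact hzero _ _ (by funext x; fin_cases x <;> simp [hv_def, V13, Matrix.vecHead, Matrix.vecTail])
      · exact hzero _ _ (by funext x; fin_cases x <;> simp [hv_def, V13, Matrix.vecHead, Matrix.vecTail])
      · exact hzero _ _ (by funext x; fin_cases x <;> simp [hv_def, V13, Matrix.vecHead, Matrix.vecTail])
      · exact hmul _ _ 2 (by funext x; fin_cases x <;> simp [hv_def, V13, Matrix.vecHead, Matrix.vecTail]) (by decide)
      · exact hmul _ _ 3 (by funext x; fin_cases x <;> simp [hv_def, V13, Matrix.vecHead, Matrix.vecTail]) (by decide)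
      · exact hmul _ _ 4 (by funext x; fin_cases x <;> simp [hv_def, V13, Matrix.vecHead, Matrix.vecTail]) (by decide)
      · exact hzero _ _ (by funext x; fin_cases x <;> simp [hv_def, V13, Matrix.vecHead, Matrix.vecTail])
      · exact hzero _ _ (by funext x; fin_cases x <;> simp [hv_def, V13, Matrix.vecHead, Matrix.vecTail])
      · exact hmul _ _ 3 (by funext x; fin_cases x <;> simp [hv_def, V13, Matrix.vecHead, Matrix.vecTail]) (by decide)
      · exact hmul _ _ 4
          (by funext x; fin_cases x <;> simp [hv_def, V13, Matrix.vecHead, Matrix.vecTail] <;>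
            first
              | ring1
              | linear_combination hq6
              | linear_combination -hq6
              | linear_combination q ^ 2 * hq6
              | linear_combination -(q ^ 2 * hq6))
          (by decide)
      · exact hmul _ _ 2
          (by funext x; fin_cases x <;> simp [hv_def, V13, Matrix.vecHead, Matrix.vecTail] <;>
            first
              | ring1
              | linear_combination hq6
              | linear_combination -hq6
              | linear_combination q ^ 2 * hq6
              | linear_combination -(q ^ 2 * hq6))
          (by decide)
      · exact hzero _ _ (by funext x; fin_cases x <;> simp [hv_def, V13, Matrix.vecHead, Matrix.vecTail])
      · exact hzero _ _ (by funext x; fin_cases x <;> simp [hv_def, V13, Matrix.vecHead, Matrix.vecTail])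
      · exact hmul _ _ 4 (by funext x; fin_cases x <;> simp [hv_def, V13, Matrix.vecHead, Matrix.vecTail]) (by decide)
      · exact hmul _ _ 2
          (by funext x; fin_cases x <;> simp [hv_def, V13, Matrix.vecHead, Matrix.vecTail] <;>
            first
              | ring1
              | linear_combination hq6
              | linear_combination -hq6
              | linear_combination q ^ 2 * hq6
              | linear_combination -(q ^ 2 * hq6))
          (by decide)
      · exact hmul _ _ 3
          (by funext x; fin_cases x <;> simp [hv_def, V13, Matrix.vecHead, Matrix.vecTail] <;>
            first
              | ring1
              | linear_combination hq6
              | linear_combination -hq6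
              | linear_combination q ^ 2 * hq6
              | linear_combination -(q ^ 2 * hq6))
          (by decide)
    have hi' : d i = a := hi
    have hj' : d j = b := hj
    show v i * v j ∈ X (a + b)
    rw [← hi', ← hj']
    exact key i j
  · -- connectedness of the support
    have hne : ∀ m : Fin 5, v m ≠ 0 → X (d m) ≠ ⊥ := by
      intro m hm h
      exact hm ((Submodule.mem_bot k).1 (h ▸ hv_mem m _ rfl))
    have h2mem : (2 : ZMod 6) ∈ AddSubgroup.closure {a | X a ≠ ⊥} := by
      apply AddSubgroup.subset_closure
      show X 2 ≠ ⊥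
      have hd3 : d 3 = 2 := by decide
      refine hd3 ▸ hne 3 ?_
      intro h
      have h2' := congrFun h 2
      simp [hv_def, V13, Matrix.vecHead, Matrix.vecTail] at h2'
    have h3mem : (3 : ZMod 6) ∈ AddSubgroup.closure {a | X a ≠ ⊥} := by
      apply AddSubgroup.subset_closure
      show X 3 ≠ ⊥
      have hd1 : d 1 = 3 := by decide
      refine hd1 ▸ hne 1 ?_
      intro h
      have h1' := congrFun h 0
      simp [hv_def, V13, Matrix.vecHead, Matrix.vecTail] at h1'
    have h1mem : (1 : ZMod 6) ∈ AddSubgroup.closure {a | X a ≠ ⊥} := by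
      have he : (1 : ZMod 6) = 3 - 2 := by decide
      rw [he]
      exact AddSubgroup.sub_mem _ h3mem h2mem
    refine le_antisymm le_top ?_
    intro x _
    have hx : x = x.val • (1 : ZMod 6) := by
      rw [nsmul_eq_mul, mul_one]
      simp [ZMod.natCast_val, ZMod.cast_id]
    rw [hx]
    exact AddSubgroup.nsmul_mem _ h1mem _
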